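/- Let N > 0, δ > 0, k ≥ 1 and α = (α_1, …, α_k) ∈ ℂ^k, and define for n ∈ ℕ and β ∈ ℂ: p_N(n|β) := (1/(N+1))·(N/(N+1))^n·exp(−|β|²/(N+1))·L_n(−|β|²/(N·(N+1))), where L_n(x) := Σ_{j=0}^n binom(n,j)·(−x)^j/j! is the n-th Laguerre polynomial. Then for every s > 0, the sum over all tuples (n_1, …, n_k) ∈ ℕ^k with n_1 + ⋯ + n_k ≤ k·(N+δ) of the product p_N(n_1|α_1)⋯p_N(n_k|α_k) is at most exp(s·k·(N+δ))·(N+1−N·e^{−s})^{−k}·exp(−‖α‖²·(1−e^{−s})/(N+1−N·e^{−s})), where ‖α‖² = Σ_{i=1}^k |α_i|². -/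

import Mathlib

/-- The `n`-th Laguerre polynomial `L_n(x) = Σ_{j=0}^n binom(n,j)·(−x)^j/j!`. -/
noncomputable def laguerre (n : ℕ) (x : ℝ) : ℝ :=
  ∑ j ∈ Finset.range (n + 1), (n.choose j : ℝ) * (-x) ^ j / (Nat.factorial j : ℝ)

/-- Photon-number distribution of a displaced thermal state with mean thermal photon
number `N` and displacement `β`. -/
noncomputable def pdisp (N : ℝ) (β : ℂ) (n : ℕ) : ℝ :=
  (1 / (N + 1)) * (N / (N + 1)) ^ n * Real.exp (-(‖β‖) ^ 2 / (N + 1)) *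
    laguerre n (-(‖β‖) ^ 2 / (N * (N + 1)))

lemma laguerre_nonneg (n : ℕ) {x : ℝ} (hx : x ≤ 0) : 0 ≤ laguerre n x := by
  apply Finset.sum_nonneg
  intro j _
  have h : (0:ℝ) ≤ -x := by linarith
  positivity

lemma pdisp_nonneg {N : ℝ} (hN : 0 < N) (β : ℂ) (n : ℕ) : 0 ≤ pdisp N β n := by
  have h1 : (0:ℝ) < N + 1 := by linarith
  have hx : -(‖β‖) ^ 2 / (N * (N + 1)) ≤ 0 :=
    div_nonpos_of_nonpos_of_nonneg (neg_nonpos.mpr (sq_nonneg _)) (le_of_lt (mul_pos hN h1))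
  unfold pdisp
  have h2 : (0:ℝ) ≤ N / (N + 1) := le_of_lt (div_pos hN h1)
  have := laguerre_nonneg n hx
  positivity

lemma hrow {t : ℝ} (ht0 : 0 ≤ t) (ht1 : t < 1) (j : ℕ) :
    HasSum (fun n : ℕ => (n.choose j : ℝ) * t ^ n) (t ^ j / (1 - t) ^ (j + 1)) := by
  have hnorm : ‖t‖ < 1 := by rwa [Real.norm_eq_abs, abs_of_nonneg ht0]
  have h := (hasSum_choose_mul_geometric_of_norm_lt_one j hnorm).mul_left (t ^ j)
  have h2 : HasSum (fun n : ℕ => (((n + j).choose j : ℝ)) * t ^ (n + j))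
      (t ^ j * (1 / (1 - t) ^ (j + 1))) := by
    convert h using 2 with n
    · rfl
    rw [pow_add]; ring
  have h3 := (hasSum_nat_add_iff (f := fun n : ℕ => (n.choose j : ℝ) * t ^ n) j).mp h2
  have hz : ∑ i ∈ Finset.range j, (i.choose j : ℝ) * t ^ i = 0 := by
    apply Finset.sum_eq_zero
    intro i hi
    rw [Nat.choose_eq_zero_of_lt (Finset.mem_range.mp hi)]
    simp
  rw [hz, add_zero] at h3
  convert h3 using 1
  · rfl
  field_simp

lemma hasSum_laguerre_gen {t y : ℝ} (ht0 : 0 ≤ t) (ht1 : t < 1) (hy : 0 ≤ y) :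
    HasSum (fun n => t ^ n * laguerre n (-y))
      ((1 / (1 - t)) * Real.exp (y * t / (1 - t))) := by
  have h1t : 0 < 1 - t := by linarith
  set g : ℕ × ℕ → ℝ := fun p => (p.2.choose p.1 : ℝ) * y ^ p.1 / (p.1.factorial : ℝ) * t ^ p.2
    with hg_def
  have hg_nonneg : ∀ p, 0 ≤ g p := by
    intro p
    have : (0:ℝ) ≤ (p.2.choose p.1 : ℝ) := Nat.cast_nonneg _
    positivity
  have hrowsum : ∀ j : ℕ, HasSum (fun n => g (j, n))
      (y ^ j / (j.factorial : ℝ) * (t ^ j / (1 - t) ^ (j + 1))) := by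
    intro j
    have := (hrow ht0 ht1 j).mul_left (y ^ j / (j.factorial : ℝ))
    convert this using 2 with n
    · rfl
    simp only [hg_def]
    ring
  have hcol : HasSum (fun j : ℕ => y ^ j / (j.factorial : ℝ) * (t ^ j / (1 - t) ^ (j + 1)))
      ((1 / (1 - t)) * Real.exp (y * t / (1 - t))) := by
    have hexp : HasSum (fun j : ℕ => (y * t / (1 - t)) ^ j / (j.factorial : ℝ))
        (Real.exp (y * t / (1 - t))) := by
      have := NormedSpace.expSeries_div_hasSum_exp (y * t / (1 - t))
      rwa [← Real.exp_eq_exp_ℝ] at this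
    have := hexp.mul_left (1 / (1 - t))
    convert this using 2 with j
    · rfl
    rw [div_pow, mul_pow, pow_succ]
    field_simp
  have hg_sum : Summable g := by
    refine (summable_prod_of_nonneg hg_nonneg).mpr ⟨fun j => (hrowsum j).summable, ?_⟩
    apply Summable.congr hcol.summable
    intro j
    exact ((hrowsum j).tsum_eq).symm
  have hinner : ∀ n : ℕ, ∑' j : ℕ, g (j, n) = t ^ n * laguerre n (-y) := by
    intro n
    have hfin : ∀ j ∉ Finset.range (n + 1), g (j, n) = 0 := by
      intro j hj
      have : n < j := by simp [Nat.lt_succ_iff, not_le] at hj; omega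
      simp only [hg_def]
      rw [Nat.choose_eq_zero_of_lt this]
      simp
    rw [tsum_eq_sum hfin]
    unfold laguerre
    rw [Finset.mul_sum]
    apply Finset.sum_congr rfl
    intro j _
    simp only [hg_def, neg_neg]
    ring
  have hswap : ∑' (n : ℕ) (j : ℕ), g (j, n) = ∑' (j : ℕ) (n : ℕ), g (j, n) := by
    exact Summable.tsum_comm' hg_sum (fun j => (hrowsum j).summable)
      (fun n => summable_of_ne_finset_zero (s := Finset.range (n + 1)) (by
        intro j hj
        simp only [hg_def]
        have : n < j := by simp [Nat.lt_succ_iff, not_le] at hj ⊢; omega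
        rw [Nat.choose_eq_zero_of_lt this]; simp))
  have hsum_n : Summable (fun n => t ^ n * laguerre n (-y)) := by
    have h := ((Equiv.prodComm ℕ ℕ).summable_iff.mpr hg_sum)
    have h2 := (summable_prod_of_nonneg (f := fun p : ℕ × ℕ => g (p.2, p.1))
      (fun p => hg_nonneg _)).mp h
    apply Summable.congr h2.2
    intro n
    exact hinner n
  have htsum : ∑' n, t ^ n * laguerre n (-y)
      = (1 / (1 - t)) * Real.exp (y * t / (1 - t)) := by
    calc ∑' n, t ^ n * laguerre n (-y) = ∑' (n : ℕ) (j : ℕ), g (j, n) := by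
          exact tsum_congr fun n => (hinner n).symm
      _ = ∑' (j : ℕ) (n : ℕ), g (j, n) := hswap
      _ = ∑' j : ℕ, y ^ j / (j.factorial : ℝ) * (t ^ j / (1 - t) ^ (j + 1)) :=
          tsum_congr fun j => (hrowsum j).tsum_eq
      _ = (1 / (1 - t)) * Real.exp (y * t / (1 - t)) := hcol.tsum_eq
  exact htsum ▸ hsum_n.hasSum

lemma hasSum_pdisp_mgf {N : ℝ} (hN : 0 < N) (β : ℂ) {z : ℝ} (hz0 : 0 < z) (hz1 : z < 1) :
    HasSum (fun n => pdisp N β n * z ^ n)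
      ((N + 1 - N * z)⁻¹ *
        Real.exp (-(‖β‖) ^ 2 * (1 - z) / (N + 1 - N * z))) := by
  have hN1 : (0:ℝ) < N + 1 := by linarith
  have hD : (0:ℝ) < N + 1 - N * z := by nlinarith
  set b : ℝ := (‖β‖) ^ 2 with hb
  have hb0 : 0 ≤ b := sq_nonneg _
  set t : ℝ := N * z / (N + 1) with ht
  set y : ℝ := b / (N * (N + 1)) with hy_def
  have ht0 : 0 ≤ t := le_of_lt (div_pos (mul_pos hN hz0) hN1)
  have ht1 : t < 1 := by
    rw [ht, div_lt_one hN1]; nlinarith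
  have hy : 0 ≤ y := div_nonneg hb0 (le_of_lt (mul_pos hN hN1))
  have h1t : (1:ℝ) - t = (N + 1 - N * z) / (N + 1) := by
    rw [ht]; field_simp
  have h1t0 : 0 < 1 - t := by linarith
  have h := (hasSum_laguerre_gen ht0 ht1 hy).mul_left
    ((1 / (N + 1)) * Real.exp (-b / (N + 1)))
  have harg : -b / (N * (N + 1)) = -y := by
    rw [hy_def, neg_div]
  have hfun : (fun n => pdisp N β n * z ^ n)
      = fun n => (1 / (N + 1)) * Real.exp (-b / (N + 1)) * (t ^ n * laguerre n (-y)) := by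
    funext n
    unfold pdisp
    rw [← hb, harg]
    have hpow : (N / (N + 1)) ^ n * z ^ n = t ^ n := by
      rw [ht, ← mul_pow, div_mul_eq_mul_div]
    rw [← hpow]
    ring
  have hval : (1 / (N + 1)) * Real.exp (-b / (N + 1)) *
        ((1 / (1 - t)) * Real.exp (y * t / (1 - t)))
      = (N + 1 - N * z)⁻¹ * Real.exp (-b * (1 - z) / (N + 1 - N * z)) := by
    rw [mul_mul_mul_comm, ← Real.exp_add]
    congr 1
    · rw [h1t]
      field_simp
    · congr 1
      rw [h1t, hy_def, ht]
      field_simp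
      ring
  rw [hfun, ← hval]
  exact h

set_option maxHeartbeats 1000000 in
lemma hasSum_pi_prod : ∀ (k : ℕ) (f : Fin k → ℕ → ℝ) (a : Fin k → ℝ),
    (∀ i n, 0 ≤ f i n) → (∀ i, HasSum (f i) (a i)) →
    HasSum (fun n : Fin k → ℕ => ∏ i, f i (n i)) (∏ i, a i) := by
  intro k
  induction k with
  | zero =>
    intro f a _ _
    have h1 : (fun n : Fin 0 → ℕ => ∏ i, f i (n i)) = fun _ => 1 := by
      funext n; simp
    rw [h1, Finset.univ_eq_empty, Finset.prod_empty]
    have := hasSum_single (f := fun _ : Fin 0 → ℕ => (1:ℝ)) default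
      (fun b hb => absurd (Subsingleton.elim b default) hb)
    simpa using this
  | succ m ih =>
    intro f a hnn hf
    have h0 := hf 0
    have htail : HasSum (fun n : Fin m → ℕ => ∏ i : Fin m, f i.succ (n i)) (∏ i : Fin m, a i.succ) :=
      ih (fun i : Fin m => f i.succ) (fun i : Fin m => a i.succ) (fun i n => hnn _ _) (fun i => hf _)
    have hprodsum : Summable
        (fun q : ℕ × (Fin m → ℕ) => f 0 q.1 * ∏ i : Fin m, f i.succ (q.2 i)) := by
      refine (summable_prod_of_nonneg ?_).mpr ⟨?_, ?_⟩
      · intro p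
        exact mul_nonneg (hnn _ _) (Finset.prod_nonneg fun i _ => hnn _ _)
      · intro x
        exact htail.summable.mul_left (f 0 x)
      · apply Summable.congr (h0.summable.mul_right (∏ i : Fin m, a i.succ))
        intro x
        dsimp only
        rw [tsum_mul_left, htail.tsum_eq]
    have hmul := h0.mul htail hprodsum
    apply ((Fin.consEquiv fun _ : Fin (m + 1) => ℕ).hasSum_iff).mp
    have hfun : ((fun n : Fin (m + 1) → ℕ => ∏ i, f i (n i)) ∘
        (Fin.consEquiv fun _ : Fin (m + 1) => ℕ))
        = fun q : ℕ × (Fin m → ℕ) => f 0 q.1 * ∏ i : Fin m, f i.succ (q.2 i) := by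
      funext q
      simp [Fin.consEquiv, Fin.prod_univ_succ]
    rw [hfun, Fin.prod_univ_succ]
    exact hmul

/-- Chernoff/Markov bound for the lower tail of the total photon count of `k`
independent displaced thermal modes: for every `s > 0`, the probability that
`n_1 + ⋯ + n_k ≤ k(N+δ)` is at most
`exp(s·k·(N+δ))·(N+1−N·e^{−s})^{−k}·exp(−‖α‖²(1−e^{−s})/(N+1−N·e^{−s}))`. -/
theorem displaced_thermal_lower_tail (N δ : ℝ) (hN : 0 < N) (hδ : 0 < δ)
    (k : ℕ) (hk : 1 ≤ k) (α : Fin k → ℂ) (s : ℝ) (hs : 0 < s) :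
    (∑' n : Fin k → ℕ,
      if (∑ i, (n i : ℝ)) ≤ (k : ℝ) * (N + δ)
      then ∏ i, pdisp N (α i) (n i)
      else 0)
    ≤ Real.exp (s * k * (N + δ)) * (N + 1 - N * Real.exp (-s)) ^ (-(k : ℤ)) *
      Real.exp (-(∑ i, (‖α i‖) ^ 2) * (1 - Real.exp (-s)) /
        (N + 1 - N * Real.exp (-s))) := by
  set z := Real.exp (-s) with hz
  have hz0 : 0 < z := Real.exp_pos _
  have hz1 : z < 1 := by rw [hz]; exact Real.exp_lt_one_iff.mpr (by linarith)
  have hD : (0:ℝ) < N + 1 - N * z := by nlinarith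
  set f : Fin k → ℕ → ℝ := fun i n => pdisp N (α i) n * z ^ n with hf_def
  set a : Fin k → ℝ := fun i => (N + 1 - N * z)⁻¹ *
      Real.exp (-(‖α i‖) ^ 2 * (1 - z) / (N + 1 - N * z)) with ha_def
  have hfs : ∀ i, HasSum (f i) (a i) := fun i => hasSum_pdisp_mgf hN (α i) hz0 hz1
  have hnn : ∀ i n, 0 ≤ f i n := fun i n =>
    mul_nonneg (pdisp_nonneg hN _ _) (pow_nonneg hz0.le _)
  have hprod := hasSum_pi_prod k f a hnn hfs
  have hbig := hprod.mul_left (Real.exp (s * k * (N + δ)))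
  have hle : ∀ n : Fin k → ℕ,
      (if (∑ i, (n i : ℝ)) ≤ (k : ℝ) * (N + δ) then ∏ i, pdisp N (α i) (n i) else 0)
      ≤ Real.exp (s * k * (N + δ)) * ∏ i, f i (n i) := by
    intro n
    have hP0 : 0 ≤ ∏ i, pdisp N (α i) (n i) :=
      Finset.prod_nonneg fun i _ => pdisp_nonneg hN _ _
    have hprod_eq : ∏ i, f i (n i)
        = (∏ i, pdisp N (α i) (n i)) * Real.exp (-(s * ∑ i, (n i : ℝ))) := by
      simp only [hf_def]
      rw [Finset.prod_mul_distrib]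
      congr 1
      rw [Finset.prod_pow_eq_pow_sum, hz, ← Real.exp_nat_mul]
      congr 1
      rw [Nat.cast_sum]
      ring
    by_cases hcond : (∑ i, (n i : ℝ)) ≤ (k : ℝ) * (N + δ)
    · rw [if_pos hcond, hprod_eq]
      have heq : Real.exp (s * k * (N + δ)) *
          ((∏ i, pdisp N (α i) (n i)) * Real.exp (-(s * ∑ i, (n i : ℝ))))
          = (∏ i, pdisp N (α i) (n i)) *
            Real.exp (s * k * (N + δ) + -(s * ∑ i, (n i : ℝ))) := by
        rw [Real.exp_add]
        ring
      rw [heq]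
      refine le_mul_of_one_le_right hP0 (Real.one_le_exp ?_)
      nlinarith
    · rw [if_neg hcond]
      exact mul_nonneg (Real.exp_pos _).le (Finset.prod_nonneg fun i _ => hnn i _)
  have hL : Summable (fun n : Fin k → ℕ =>
      if (∑ i, (n i : ℝ)) ≤ (k : ℝ) * (N + δ) then ∏ i, pdisp N (α i) (n i) else 0) := by
    apply Summable.of_nonneg_of_le ?_ hle hbig.summable
    intro n
    split
    · exact Finset.prod_nonneg fun i _ => pdisp_nonneg hN _ _
    · exact le_rfl
  have hmain := Summable.tsum_le_tsum hle hL hbig.summable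
  rw [hbig.tsum_eq] at hmain
  refine le_trans hmain ?_
  have hprod_a : ∏ i, a i = (N + 1 - N * z) ^ (-(k : ℤ)) *
      Real.exp (-(∑ i, (‖α i‖) ^ 2) * (1 - z) / (N + 1 - N * z)) := by
    simp only [ha_def]
    rw [Finset.prod_mul_distrib, Finset.prod_const, Finset.card_univ, Fintype.card_fin,
      ← Real.exp_sum]
    congr 1
    · rw [zpow_neg, zpow_natCast, inv_pow]
    · congr 1
      rw [← Finset.sum_div, ← Finset.sum_mul]
      congr 2
      rw [← Finset.sum_neg_distrib]
  rw [hprod_a, ← mul_assoc]
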